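/- Let $V \subset \mathbb{R}^l$ be an open connected neighborhood of $0$ and let $q : V \to \mathbb{R}$ be real analytic. Suppose that for every direction $b \in \mathbb{R}^l$ there exists $\delta > 0$ and a $C^1$ curve $a : (-\delta,\delta) \to V$ with $a(0) = 0$, $a'(0) = b$, and $\frac{d}{dt} q(a(t)) = 0$ for all $|t| < \delta$. Then $q$ is constant on $V$. -/

import Mathlib

open Set

/-- If a real analytic function `q` on an open connected neighborhood `V` of `0` in
`ℝˡ` admits, in every direction `b`, a `C¹` curve through `0` with velocity `b`
along which `q` is critical (`(q ∘ a)' ≡ 0`), then `q` is constant on `V`. -/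
theorem analytic_constant_of_critical_curves (l : ℕ)
    (V : Set (EuclideanSpace ℝ (Fin l))) (hVopen : IsOpen V) (hVconn : IsConnected V)
    (hV0 : (0 : EuclideanSpace ℝ (Fin l)) ∈ V)
    (q : EuclideanSpace ℝ (Fin l) → ℝ) (hq : AnalyticOn ℝ q V)
    (hcurves : ∀ b : EuclideanSpace ℝ (Fin l), ∃ δ > (0 : ℝ),
      ∃ a : ℝ → EuclideanSpace ℝ (Fin l),
        (∀ t ∈ Ioo (-δ) δ, a t ∈ V) ∧ a 0 = 0 ∧ HasDerivAt a b 0 ∧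
        ContDiffOn ℝ 1 a (Ioo (-δ) δ) ∧
        ∀ t ∈ Ioo (-δ) δ, HasDerivAt (fun s => q (a s)) 0 t) :
    ∀ x ∈ V, q x = q 0 := by
  have hqN : AnalyticOnNhd ℝ q V := (hVopen.analyticOn_iff_analyticOnNhd).1 hq
  obtain ⟨p, r, hpr⟩ : ∃ p r, HasFPowerSeriesOnBall q p 0 r := by
    obtain ⟨p, hp⟩ := hqN 0 hV0
    obtain ⟨r, hr⟩ := hp
    exact ⟨p, r, hr⟩
  obtain ⟨r', hr'0, hr'r⟩ : ∃ r' : NNReal, (0 : ENNReal) < r' ∧ (r' : ENNReal) < r :=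
    ENNReal.lt_iff_exists_nnreal_btwn.1 hpr.r_pos
  have hr'pos : (0 : ℝ) < r' := by exact_mod_cast hr'0
  obtain ⟨A, hA, C, hC, hbound⟩ := hpr.uniform_geometric_approx' hr'r
  -- Main claim: all diagonal evaluations of higher coefficients vanish.
  have main : ∀ k, 1 ≤ k → ∀ b : EuclideanSpace ℝ (Fin l), p k (fun _ => b) = 0 := by
    intro k
    induction k using Nat.strong_induction_on with
    | _ k IH =>
      intro hk b
      obtain ⟨δ, hδ, a, haV, ha0, ha'b, -, hcrit⟩ := hcurves b
      have h0mem : (0 : ℝ) ∈ Ioo (-δ) δ := by constructor <;> simp [hδ]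
      -- q ∘ a is constant on the interval
      have qa_const : ∀ t ∈ Ioo (-δ) δ, q (a t) = q 0 := by
        intro t ht
        have hdiff : DifferentiableOn ℝ (fun s => q (a s)) (Ioo (-δ) δ) := fun s hs =>
          ((hcrit s hs).differentiableAt).differentiableWithinAt
        have hzero : ∀ s ∈ Ioo (-δ) δ,
            fderivWithin ℝ (fun s => q (a s)) (Ioo (-δ) δ) s = 0 := by
          intro s hs
          have h0 : HasFDerivAt (fun s => q (a s)) (0 : ℝ →L[ℝ] ℝ) s := by
            have h1 := (hcrit s hs).hasFDerivAt
            have h2 : ContinuousLinearMap.toSpanSingleton ℝ (0:ℝ) = 0 := by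
              ext; simp
            rwa [h2] at h1
          rw [fderivWithin_of_isOpen isOpen_Ioo hs, h0.fderiv]
        have := (convex_Ioo (-δ) δ).is_const_of_fderivWithin_eq_zero hdiff hzero ht h0mem
        rw [this, ha0]
      -- the rescaled curve tends to b
      have hg : Filter.Tendsto (fun t : ℝ => t⁻¹ • a t) (nhdsWithin 0 {(0:ℝ)}ᶜ) (nhds b) := by
        have := hasDerivAt_iff_tendsto_slope.1 ha'b
        refine this.congr' ?_
        filter_upwards [self_mem_nhdsWithin] with t ht
        simp [slope, ha0]
      set F : EuclideanSpace ℝ (Fin l) → ℝ := fun x => p k (fun _ => x) with hF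
      have hFcont : Continuous F :=
        (p k).coe_continuous.comp (continuous_pi fun _ => continuous_id)
      have hFg : Filter.Tendsto (fun t : ℝ => F (t⁻¹ • a t))
          (nhdsWithin 0 {(0:ℝ)}ᶜ) (nhds (F b)) := (hFcont.tendsto b).comp hg
      -- the key bound
      have hacont : Filter.Tendsto a (nhds 0) (nhds 0) := by
        simpa [ha0] using ha'b.continuousAt.tendsto
      have hsmall : ∀ᶠ t in nhds (0:ℝ), a t ∈ Metric.ball (0 : EuclideanSpace ℝ (Fin l)) r' ∧ t ∈ Ioo (-δ) δ := by
        have h1 : ∀ᶠ t in nhds (0:ℝ), a t ∈ Metric.ball (0 : EuclideanSpace ℝ (Fin l)) r' :=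
          hacont (Metric.ball_mem_nhds _ hr'pos)
        have h2 : ∀ᶠ t in nhds (0:ℝ), t ∈ Ioo (-δ) δ :=
          Ioo_mem_nhds h0mem.1 h0mem.2
        exact h1.and h2
      have key : ∀ᶠ t in nhdsWithin (0:ℝ) {(0:ℝ)}ᶜ,
          |F (t⁻¹ • a t)| ≤ C * (A / r') ^ (k + 1) * ‖t⁻¹ • a t‖ ^ (k + 1) * |t| := by
        filter_upwards [nhdsWithin_le_nhds hsmall, self_mem_nhdsWithin] with t ht htne
        have htne' : (t : ℝ) ≠ 0 := htne
        -- partial sum identity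
        have hpartial : p.partialSum (k + 1) (a t) = q 0 + F (a t) := by
          rw [FormalMultilinearSeries.partialSum, Finset.sum_range_succ]
          congr 1
          rw [Finset.sum_eq_single_of_mem 0 (Finset.mem_range.2 (by omega))]
          · exact hpr.coeff_zero _
          · intro i hi hi0
            exact IH i (Finset.mem_range.1 hi) (Nat.one_le_iff_ne_zero.2 hi0) _
        have hb := hbound (a t) ht.1 (k + 1)
        rw [hpartial] at hb
        simp only [zero_add, qa_const t ht.2] at hb
        have hFat : |F (a t)| ≤ C * (A * (‖a t‖ / r')) ^ (k + 1) := by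
          calc |F (a t)| = ‖q 0 - (q 0 + F (a t))‖ := by
                rw [Real.norm_eq_abs]; rw [abs_sub_comm]; congr 1; ring
            _ ≤ C * (A * (‖a t‖ / r')) ^ (k + 1) := hb
        -- homogeneity
        have hat : a t = t • (t⁻¹ • a t) := by rw [smul_smul, mul_inv_cancel₀ htne', one_smul]
        have hFsmul : ∀ (c : ℝ) (x : EuclideanSpace ℝ (Fin l)), F (c • x) = c ^ k * F x := by
          intro c x
          have h := (p k).map_smul_univ (fun _ : Fin k => c) (fun _ => x)
          simpa [hF, Finset.prod_const, smul_eq_mul] using h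
        have hFhom : F (a t) = t ^ k * F (t⁻¹ • a t) := by
          conv_lhs => rw [hat]
          exact hFsmul t _
        have hnorm_at : ‖a t‖ = |t| * ‖t⁻¹ • a t‖ := by
          conv_lhs => rw [hat]
          rw [norm_smul, Real.norm_eq_abs]
        have htk : (0:ℝ) < |t| ^ k := pow_pos (abs_pos.2 htne') k
        have h1 : |F (t⁻¹ • a t)| = |F (a t)| / |t| ^ k := by
          rw [hFhom, abs_mul, abs_pow]
          field_simp
        rw [h1, div_le_iff₀ htk]
        calc |F (a t)| ≤ C * (A * (‖a t‖ / r')) ^ (k + 1) := hFat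
          _ = C * (A / r') ^ (k + 1) * ‖t⁻¹ • a t‖ ^ (k + 1) * (|t| * |t| ^ k) := by
              rw [hnorm_at]
              rw [show |t| * |t| ^ k = |t| ^ (k+1) by ring]
              rw [show A * (|t| * ‖t⁻¹ • a t‖ / r') = (A / r') * ‖t⁻¹ • a t‖ * |t| by ring]
              rw [mul_pow, mul_pow]
              ring
          _ = C * (A / r') ^ (k + 1) * ‖t⁻¹ • a t‖ ^ (k + 1) * |t| * |t| ^ k := by ring
      -- RHS tends to zero
      have hrhs : Filter.Tendsto
          (fun t : ℝ => C * (A / r') ^ (k + 1) * ‖t⁻¹ • a t‖ ^ (k + 1) * |t|)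
          (nhdsWithin 0 {(0:ℝ)}ᶜ) (nhds 0) := by
        have h1 : Filter.Tendsto (fun t : ℝ => ‖t⁻¹ • a t‖ ^ (k + 1))
            (nhdsWithin 0 {(0:ℝ)}ᶜ) (nhds (‖b‖ ^ (k + 1))) :=
          ((continuous_norm.tendsto b).comp hg).pow _
        have h2 : Filter.Tendsto (fun t : ℝ => |t|) (nhdsWithin 0 {(0:ℝ)}ᶜ) (nhds 0) := by
          have : Filter.Tendsto (fun t : ℝ => |t|) (nhds 0) (nhds 0) := by
            simpa using continuous_abs.tendsto (0:ℝ)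
          exact this.mono_left nhdsWithin_le_nhds
        have := ((h1.const_mul (C * (A / r') ^ (k + 1))).mul h2)
        simpa using this
      have hF0 : Filter.Tendsto (fun t : ℝ => F (t⁻¹ • a t))
          (nhdsWithin 0 {(0:ℝ)}ᶜ) (nhds 0) := by
        apply squeeze_zero_norm' _ hrhs
        filter_upwards [key] with t ht using by simpa [Real.norm_eq_abs] using ht
      exact tendsto_nhds_unique hFg hF0
  -- conclude q = q 0 near 0
  have hev : q =ᶠ[nhds (0 : EuclideanSpace ℝ (Fin l))] fun _ => q 0 := by
    filter_upwards [EMetric.ball_mem_nhds (0 : EuclideanSpace ℝ (Fin l)) hpr.r_pos] with y hy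
    have hs := hpr.hasSum (by simpa using hy)
    have hs' : HasSum (fun n => p n fun _ : Fin n => y) (q 0) := by
      have h0 : (fun n => p n fun _ : Fin n => y) 0 = q 0 := hpr.coeff_zero _
      have := hasSum_single (f := fun n => p n fun _ : Fin n => y) 0
        (fun n hn => main n (Nat.one_le_iff_ne_zero.2 hn) y)
      rwa [show (p 0 fun _ : Fin 0 => y) = q 0 from h0] at this
    have : q (0 + y) = q 0 := hs.unique hs'
    simpa using this
  intro x hx
  exact AnalyticOnNhd.eqOn_of_preconnected_of_eventuallyEq hqN analyticOnNhd_const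
    hVconn.isPreconnected hV0 hev hx
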